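/- (Grace's theorem, closed-disc case) Let a(z) and b(z) be complex polynomials, both of degree n ≥ 1, which are apolar, i.e. A_n(a,b) = 0. If all zeros of a(z) lie in a closed disc D = {z : |z - c| ≤ r}, then at least one zero of b(z) lies in D. -/

import Mathlib

open Polynomial

/-- The apolarity form `A_N(u,v) = Σ_{j=0}^N (-1)^j u_j v_{N-j} / C(N,j)`. -/
noncomputable def apolarSum (N : ℕ) (u v : Polynomial ℂ) : ℂ :=
  ∑ j ∈ Finset.range (N + 1),
    (-1) ^ j * u.coeff j * v.coeff (N - j) / (N.choose j : ℂ)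

open Complex

private lemma keyNormSq (d e : ℂ) (r : ℝ) :
    normSq ((starRingEnd ℂ) d * e - (r:ℂ)^2) =
      r^2 * normSq (d - e) + (normSq d - r^2) * (normSq e - r^2) := by
  simp only [normSq_apply, Complex.sub_re, Complex.sub_im, Complex.mul_re, Complex.mul_im,
    Complex.conj_re, Complex.conj_im, Complex.ofReal_pow, Complex.ofReal_re, Complex.ofReal_im,
    pow_two]
  ring

private lemma keyAbs_le (d e : ℂ) (r : ℝ) (hr : 0 ≤ r) (he : ‖e‖ ≤ r)
    (hd : r ≤ ‖d‖) :
    ‖(starRingEnd ℂ) d * e - (r:ℂ)^2‖ ≤ r * ‖d - e‖ := by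
  apply le_of_pow_le_pow_left₀ (n := 2) two_ne_zero (by positivity)
  rw [mul_pow, Complex.sq_norm, Complex.sq_norm]
  have h1 : normSq e - r^2 ≤ 0 := by nlinarith [Complex.sq_norm e, norm_nonneg e]
  have h2 : 0 ≤ normSq d - r^2 := by nlinarith [Complex.sq_norm d]
  nlinarith [keyNormSq d e r]

private lemma keyAbs_lt (d e : ℂ) (r : ℝ) (hr : 0 < r) (he : r < ‖e‖)
    (hd : r < ‖d‖) :
    r * ‖d - e‖ < ‖(starRingEnd ℂ) d * e - (r:ℂ)^2‖ := by
  apply lt_of_pow_lt_pow_left₀ 2 (norm_nonneg _)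
  rw [mul_pow, Complex.sq_norm, Complex.sq_norm]
  have h1 : 0 < normSq e - r^2 := by nlinarith [Complex.sq_norm e]
  have h2 : 0 < normSq d - r^2 := by nlinarith [Complex.sq_norm d]
  nlinarith [keyNormSq d e r]

private lemma grace_sum_ne_zero (c : ℂ) (r : ℝ) (hr : 0 < r) (S : Multiset ℂ) (hS : S ≠ 0)
    (hmem : ∀ α ∈ S, ‖α - c‖ ≤ r)
    (ζ β : ℂ) (hζ : r < ‖ζ - c‖) (hβ : r < ‖β - c‖) :
    (S.map (fun α => (β - α) / (ζ - α))).sum ≠ 0 := by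
  have hD2 : (0:ℝ) < normSq (ζ - c) - r^2 := by nlinarith [Complex.sq_norm (ζ - c)]
  set D2 : ℝ := normSq (ζ - c) - r^2 with hD2def
  have hD2C : (D2 : ℂ) ≠ 0 := by
    simp only [ne_eq, Complex.ofReal_eq_zero]; exact ne_of_gt hD2
  have hkey2 : (D2:ℂ) = (ζ - c) * (starRingEnd ℂ) (ζ - c) - (r:ℂ)^2 := by
    rw [hD2def, Complex.mul_conj]; push_cast; ring
  set M : ℂ := 1 + (β - ζ) * ((starRingEnd ℂ) (ζ - c) / (D2:ℂ)) with hM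
  set P : ℝ := ‖β - ζ‖ * r / D2 with hP
  have hζα : ∀ α ∈ S, ζ - α ≠ 0 := by
    intro α hα h0
    have hαζ : α = ζ := by linear_combination -h0
    have := hmem α hα
    rw [hαζ] at this
    exact absurd this (not_le.mpr hζ)
  -- bound on each term
  have hterm : ∀ α ∈ S, ‖(β - α)/(ζ - α) - M‖ ≤ P := by
    intro α hα
    have hne := hζα α hα
    have hY : 0 < ‖ζ - α‖ := by
      simpa using (norm_pos_iff.mpr hne)
    have hid : (β - α)/(ζ - α) - M
        = (β - ζ) * (((starRingEnd ℂ) (ζ - c) * (α - c) - (r:ℂ)^2)/((ζ - α) * (D2:ℂ))) := by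
      rw [hM]
      field_simp
      rw [hkey2]
      simp only [map_sub]
      ring
    rw [hid, norm_mul, norm_div, norm_mul, Complex.norm_real, Real.norm_eq_abs, abs_of_pos hD2, ← mul_div_assoc]
    have hde : (ζ - c) - (α - c) = ζ - α := by ring
    have hkey := keyAbs_le (ζ - c) (α - c) r hr.le (hmem α hα) hζ.le
    rw [hde] at hkey
    rw [hP, div_le_div_iff₀ (mul_pos hY hD2) hD2]
    nlinarith [mul_le_mul_of_nonneg_right
      (mul_le_mul_of_nonneg_left hkey (norm_nonneg (β - ζ))) hD2.le]
  -- P < |M|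
  have hPM : P < ‖M‖ := by
    have hMid : M = ((starRingEnd ℂ) (ζ - c) * (β - c) - (r:ℂ)^2)/(D2:ℂ) := by
      rw [hM]
      field_simp
      rw [hkey2]
      simp only [map_sub]
      ring
    have hde : (ζ - c) - (β - c) = ζ - β := by ring
    have hkey := keyAbs_lt (ζ - c) (β - c) r hr hβ hζ
    rw [hde] at hkey
    rw [hMid, norm_div, Complex.norm_real, Real.norm_eq_abs, abs_of_pos hD2, hP, div_lt_div_iff₀ hD2 hD2]
    rw [norm_sub_rev β ζ]
    nlinarith
  -- conclude
  intro h0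
  have hsum : (S.map (fun α => (β - α)/(ζ - α) - M)).sum
      = (S.map (fun α => (β - α)/(ζ - α))).sum - (S.card : ℂ) • M := by
    rw [Multiset.sum_map_sub]
    congr 1
    · simp [Multiset.map_const', Multiset.sum_replicate]
  have hcard : 0 < S.card := Multiset.card_pos.mpr hS
  have hnorm : ‖(S.map (fun α => (β - α)/(ζ - α) - M)).sum‖ ≤ (S.card : ℝ) * P := by
    calc ‖(S.map (fun α => (β - α)/(ζ - α) - M)).sum‖
        ≤ ((S.map (fun α => (β - α)/(ζ - α) - M)).map norm).sum :=
          norm_multiset_sum_le _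
      _ ≤ (Multiset.card ((S.map (fun α => (β - α)/(ζ - α) - M)).map norm)) • P := by
          apply Multiset.sum_le_card_nsmul
          intro x hx
          simp only [Multiset.map_map, Multiset.mem_map, Function.comp] at hx
          obtain ⟨α, hα, rfl⟩ := hx
          simpa using hterm α hα
      _ = (S.card : ℝ) * P := by
          rw [Multiset.card_map, Multiset.card_map, nsmul_eq_mul]
  rw [hsum, h0, zero_sub, norm_neg] at hnorm
  rw [norm_smul, Complex.norm_natCast] at hnorm
  have : (S.card:ℝ) * ‖M‖ < (S.card:ℝ) * ‖M‖ := by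
    calc (S.card:ℝ) * ‖M‖ ≤ (S.card:ℝ) * P := hnorm
    _ < (S.card:ℝ) * ‖M‖ := by
        apply mul_lt_mul_of_pos_left hPM
        exact_mod_cast hcard
  exact lt_irrefl _ this

private lemma eval_derivative_multiset_prod (ζ : ℂ) :
    ∀ (S : Multiset ℂ), (∀ α ∈ S, ζ - α ≠ 0) →
      eval ζ (derivative (S.map (fun α => X - C α)).prod)
        = eval ζ ((S.map (fun α => X - C α)).prod) * (S.map (fun α => 1/(ζ - α))).sum := by
  intro S
  induction S using Multiset.induction with
  | empty => simp
  | cons α S ih =>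
    intro h
    have hα : ζ - α ≠ 0 := h α (Multiset.mem_cons_self _ _)
    have ih' := ih (fun x hx => h x (Multiset.mem_cons_of_mem hx))
    simp only [Multiset.map_cons, Multiset.prod_cons, derivative_mul, derivative_sub,
      derivative_X, derivative_C, sub_zero, one_mul, eval_add, eval_mul, eval_sub, eval_X,
      eval_C, Multiset.sum_cons, ih']
    field_simp

private lemma card_sum_eq (ζ β : ℂ) :
    ∀ (S : Multiset ℂ), (∀ α ∈ S, ζ - α ≠ 0) →
      (S.card : ℂ) + (β - ζ) * (S.map (fun α => 1/(ζ - α))).sum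
        = (S.map (fun α => (β - α)/(ζ - α))).sum := by
  intro S
  induction S using Multiset.induction with
  | empty => simp
  | cons α S ih =>
    intro h
    have hα : ζ - α ≠ 0 := h α (Multiset.mem_cons_self _ _)
    have ih' := ih (fun x hx => h x (Multiset.mem_cons_of_mem hx))
    simp only [Multiset.map_cons, Multiset.sum_cons, Multiset.card_cons]
    push_cast
    rw [← ih']
    field_simp
    ring

private lemma laguerre (c : ℂ) (r : ℝ) (hr : 0 < r) (a : ℂ[X]) (ha : a ≠ 0)
    (hdeg : 1 ≤ a.natDegree)
    (hroots : ∀ z : ℂ, a.IsRoot z → ‖z - c‖ ≤ r) (β ζ : ℂ)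
    (hβ : r < ‖β - c‖) (hζ : r < ‖ζ - c‖) :
    eval ζ (C (a.natDegree : ℂ) * a + (C β - X) * derivative a) ≠ 0 := by
  have hcard : a.roots.card = a.natDegree :=
    (splits_iff_card_roots.mp (IsAlgClosed.splits a))
  have hmemD : ∀ α ∈ a.roots, ‖α - c‖ ≤ r := fun α hα =>
    hroots α (isRoot_of_mem_roots hα)
  have hζα : ∀ α ∈ a.roots, ζ - α ≠ 0 := by
    intro α hα h0
    have hαζ : α = ζ := by linear_combination -h0
    rw [hαζ] at hα
    exact absurd (hmemD ζ (hαζ ▸ hα)) (not_le.mpr hζ)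
  have hfac : C a.leadingCoeff * (a.roots.map (fun α => X - C α)).prod = a :=
    C_leadingCoeff_mul_prod_multiset_X_sub_C hcard
  have hlc : a.leadingCoeff ≠ 0 := leadingCoeff_ne_zero.mpr ha
  have hPV : eval ζ ((a.roots.map (fun α => X - C α)).prod) ≠ 0 := by
    rw [eval_multiset_prod]
    apply Multiset.prod_ne_zero
    intro h0
    simp only [Multiset.map_map, Multiset.mem_map, Function.comp] at h0
    obtain ⟨α, hα, hev⟩ := h0
    rw [eval_sub, eval_X, eval_C] at hev
    exact hζα α hα hev
  have hS : a.roots ≠ 0 := by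
    intro h0
    rw [h0] at hcard
    simp at hcard
    omega
  have hsum := grace_sum_ne_zero c r hr a.roots hS hmemD ζ β hζ hβ
  have heval : eval ζ (C (a.natDegree : ℂ) * a + (C β - X) * derivative a)
      = a.leadingCoeff * eval ζ ((a.roots.map (fun α => X - C α)).prod)
        * ((a.roots.map (fun α => (β - α)/(ζ - α))).sum) := by
    have hevala : eval ζ a
        = a.leadingCoeff * eval ζ ((a.roots.map (fun α => X - C α)).prod) := by
      conv_lhs => rw [← hfac]
      rw [eval_mul, eval_C]
    have hevald : eval ζ (derivative a)
        = a.leadingCoeff * (eval ζ ((a.roots.map (fun α => X - C α)).prod)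
            * (a.roots.map (fun α => 1/(ζ - α))).sum) := by
      conv_lhs => rw [← hfac]
      rw [derivative_mul, derivative_C, zero_mul, zero_add, eval_mul, eval_C,
        eval_derivative_multiset_prod ζ a.roots hζα]
    rw [eval_add, eval_mul, eval_mul, eval_C, eval_sub, eval_C, eval_X, hevala, hevald,
      ← card_sum_eq ζ β a.roots hζα, hcard]
    ring
  rw [heval]
  exact mul_ne_zero (mul_ne_zero hlc hPV) hsum

private lemma coeff_polar (a : ℂ[X]) (β : ℂ) (m : ℕ) (j : ℕ) :
    (C ((m:ℂ)+1) * a + (C β - X) * derivative a).coeff j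
      = ((m:ℂ)+1 - j) * a.coeff j + β * (j+1) * a.coeff (j+1) := by
  rw [coeff_add, coeff_C_mul, sub_mul, coeff_sub, coeff_C_mul, coeff_derivative]
  cases j with
  | zero => simp
  | succ k =>
    rw [coeff_X_mul, coeff_derivative]
    push_cast
    ring

private lemma apolar_step (m : ℕ) (a b₁ : ℂ[X]) (β : ℂ) (hb₁ : b₁.coeff (m+1) = 0) :
    apolarSum m (C ((m:ℂ)+1) * a + (C β - X) * derivative a) b₁
      = ((m:ℂ)+1) * apolarSum (m+1) a ((X - C β) * b₁) := by
  unfold apolarSum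
  have hbco : ∀ k, ((X - C β) * b₁).coeff k = (X * b₁).coeff k - β * b₁.coeff k := by
    intro k
    rw [sub_mul, coeff_sub, coeff_C_mul]
  -- peel the j = m+1 term on the RHS
  have hpeel : (-1:ℂ) ^ (m+1) * a.coeff (m+1) * ((X - C β) * b₁).coeff (m+1-(m+1))
      / ((m+1).choose (m+1) : ℂ)
      = -((-1:ℂ)^(m+1) * a.coeff (m+1) * (β * b₁.coeff 0)) := by
    rw [Nat.sub_self, hbco, Nat.choose_self]
    simp [mul_comm]
  have hsplit : ∀ j ∈ Finset.range (m+1),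
      (-1:ℂ) ^ j * a.coeff j * ((X - C β) * b₁).coeff (m+1-j) / ((m+1).choose j : ℂ)
        = (-1:ℂ) ^ j * a.coeff j * b₁.coeff (m-j) / ((m+1).choose j : ℂ)
          - (-1:ℂ) ^ j * a.coeff j * (β * b₁.coeff (m+1-j)) / ((m+1).choose j : ℂ) := by
    intro j hj
    have hj' : j ≤ m := Nat.lt_succ_iff.mp (Finset.mem_range.mp hj)
    have h1 : m+1-j = (m-j)+1 := by omega
    rw [hbco, h1, coeff_X_mul]
    ring
  have hzero : (-1:ℂ) ^ 0 * a.coeff 0 * (β * b₁.coeff (m+1-0)) / ((m+1).choose 0 : ℂ) = 0 := by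
    simp [hb₁]
  have hD : ∀ j ∈ Finset.range (m+1),
      (-1:ℂ)^(j+1) * a.coeff (j+1) * (β * b₁.coeff (m+1-(j+1))) / ((m+1).choose (j+1) : ℂ)
        = -((-1:ℂ)^j * (β * a.coeff (j+1) * b₁.coeff (m-j)) / ((m+1).choose (j+1) : ℂ)) := by
    intro j hj
    have h1 : m+1-(j+1) = m-j := by omega
    rw [h1, pow_succ]
    ring
  have hR : ∑ j ∈ Finset.range (m+1),
        (-1:ℂ)^j * a.coeff j * ((X - C β) * b₁).coeff (m+1-j) / ((m+1).choose j : ℂ)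
      + (-1:ℂ) ^ (m+1) * a.coeff (m+1) * ((X - C β) * b₁).coeff (m+1-(m+1))
          / ((m+1).choose (m+1) : ℂ)
      = ∑ j ∈ Finset.range (m+1),
          ((-1:ℂ)^j * a.coeff j * b₁.coeff (m-j) / ((m+1).choose j : ℂ)
            + (-1:ℂ)^j * (β * a.coeff (j+1) * b₁.coeff (m-j)) / ((m+1).choose (j+1) : ℂ)) := by
    rw [hpeel, Finset.sum_congr rfl hsplit, Finset.sum_sub_distrib,
      Finset.sum_range_succ' (fun j => (-1:ℂ)^j * a.coeff j * (β * b₁.coeff (m+1-j))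
        / ((m+1).choose j : ℂ)) m, hzero, add_zero, Finset.sum_congr rfl
        (fun j hj => hD j (by simpa using Nat.lt_succ_of_lt (Finset.mem_range.mp hj))),
      Finset.sum_add_distrib,
      Finset.sum_range_succ (fun j => (-1:ℂ)^j * (β * a.coeff (j+1) * b₁.coeff (m-j))
        / ((m+1).choose (j+1) : ℂ)) ]
    rw [Finset.sum_neg_distrib, Nat.choose_self]
    push_cast [pow_succ, Nat.sub_self]
    ring
  conv_rhs => rw [Finset.sum_range_succ]
  rw [hR, Finset.mul_sum]
  apply Finset.sum_congr rfl
  intro j hj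
  have hj' : j ≤ m := Nat.lt_succ_iff.mp (Finset.mem_range.mp hj)
  rw [coeff_polar]
  have hc0 : ((m.choose j : ℕ) : ℂ) ≠ 0 := by
    exact_mod_cast Nat.cast_ne_zero.mpr (Nat.choose_pos hj').ne'
  have hc1 : (((m+1).choose j : ℕ) : ℂ) ≠ 0 := by
    exact_mod_cast Nat.cast_ne_zero.mpr (Nat.choose_pos (by omega : j ≤ m+1)).ne'
  have hc2 : (((m+1).choose (j+1) : ℕ) : ℂ) ≠ 0 := by
    exact_mod_cast Nat.cast_ne_zero.mpr (Nat.choose_pos (by omega : j+1 ≤ m+1)).ne'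
  have e1nat : (m+1) * m.choose j = (m+1).choose j * (m+1-j) :=
    (Nat.add_one_mul_choose_eq m j).trans (Nat.choose_succ_right_eq (m+1) j)
  have e1 : ((m:ℂ)+1) * (m.choose j : ℂ) = ((m+1).choose j : ℂ) * ((m:ℂ)+1-j) := by
    have := congrArg (Nat.cast (R := ℂ)) e1nat
    push_cast [Nat.cast_sub (by omega : j ≤ m+1)] at this
    convert this using 2 <;> push_cast <;> ring
  have e2 : ((m:ℂ)+1) * (m.choose j : ℂ) = ((m+1).choose (j+1) : ℂ) * ((j:ℂ)+1) := by
    have := congrArg (Nat.cast (R := ℂ)) (Nat.add_one_mul_choose_eq m j)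
    push_cast at this
    linear_combination this
  rw [div_add_div _ _ hc1 hc2, mul_div_assoc', div_eq_div_iff hc0 (mul_ne_zero hc1 hc2)]
  push_cast at e1 e2 ⊢
  linear_combination (-((-1:ℂ)^j) * a.coeff j * b₁.coeff (m-j) * (((m+1).choose (j+1) : ℕ) : ℂ)) * e1
    + (-((-1:ℂ)^j) * β * a.coeff (j+1) * b₁.coeff (m-j) * (((m+1).choose j : ℕ) : ℂ)) * e2

private lemma coeff_polar_high (a : ℂ[X]) (β : ℂ) (m : ℕ) (hdeg : a.natDegree ≤ m+1) :
    (C ((m:ℂ)+1) * a + (C β - X) * derivative a).natDegree ≤ m := by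
  rw [natDegree_le_iff_coeff_eq_zero]
  intro k hk
  rw [coeff_polar]
  have h1 : a.coeff (k+1) = 0 := coeff_eq_zero_of_natDegree_lt (by omega)
  rcases eq_or_lt_of_le (Nat.succ_le_of_lt hk) with h | h
  · rw [h1, ← h]
    push_cast
    ring
  · rw [h1, coeff_eq_zero_of_natDegree_lt (by omega : a.natDegree < k)]
    ring

private lemma coeff_sub_one (a : ℂ[X]) (ha : a ≠ 0) (n : ℕ) (hdeg : a.natDegree = n+1) :
    a.coeff n = -(a.leadingCoeff * a.roots.sum) := by
  have hlc : a.leadingCoeff ≠ 0 := leadingCoeff_ne_zero.mpr ha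
  set p := a * C a.leadingCoeff⁻¹ with hp
  have hmon : p.Monic := monic_mul_leadingCoeff_inv ha
  have hproots : p.roots = a.roots := by
    rw [hp, mul_comm]
    exact roots_C_mul a (inv_ne_zero hlc)
  have hpdeg : p.natDegree = n+1 := by rw [hp, natDegree_mul_C (inv_ne_zero hlc), hdeg]
  have hnext := (IsAlgClosed.splits p).nextCoeff_eq_neg_sum_roots_of_monic hmon
  rw [nextCoeff_of_natDegree_pos (by omega), hpdeg, Nat.add_sub_cancel, hproots] at hnext
  rw [hp, coeff_mul_C] at hnext
  field_simp at hnext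
  linear_combination hnext

private lemma roots_sum_bound (c : ℂ) (r : ℝ) (a : ℂ[X])
    (hz : ∀ z : ℂ, a.IsRoot z → ‖z - c‖ ≤ r) :
    ‖a.roots.sum - (a.roots.card : ℂ) * c‖ ≤ (a.roots.card : ℝ) * r := by
  have h1 : a.roots.sum - (a.roots.card : ℂ) * c = (a.roots.map (fun α => α - c)).sum := by
    rw [Multiset.sum_map_sub]
    congr 1
    · simp
    · simp [Multiset.map_const', Multiset.sum_replicate, nsmul_eq_mul]
  rw [h1]
  calc ‖(a.roots.map (fun α => α - c)).sum‖
      ≤ ((a.roots.map (fun α => α - c)).map norm).sum := norm_multiset_sum_le _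
    _ ≤ (Multiset.card ((a.roots.map (fun α => α - c)).map norm)) • r := by
        apply Multiset.sum_le_card_nsmul
        intro x hx
        simp only [Multiset.map_map, Multiset.mem_map, Function.comp] at hx
        obtain ⟨α, hα, rfl⟩ := hx
        simpa using hz α (isRoot_of_mem_roots hα)
    _ = (a.roots.card : ℝ) * r := by
        rw [Multiset.card_map, Multiset.card_map, nsmul_eq_mul]

private lemma grace_aux (c : ℂ) (r : ℝ) (hr : 0 < r) :
    ∀ n : ℕ, 1 ≤ n → ∀ a b : ℂ[X], a.natDegree = n → b.natDegree = n →
      apolarSum n a b = 0 → (∀ z : ℂ, a.IsRoot z → ‖z - c‖ ≤ r) →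
      ∃ w : ℂ, b.IsRoot w ∧ ‖w - c‖ ≤ r := by
  intro n
  induction n using Nat.strong_induction_on with
  | _ n IH =>
    intro hn a b ha hb hap hz
    by_contra hcon
    push_neg at hcon
    have hbne : b ≠ 0 := by
      intro h
      rw [h, natDegree_zero] at hb
      omega
    have hbdeg : 0 < b.degree := by
      rw [degree_eq_natDegree hbne, hb]
      exact_mod_cast hn
    obtain ⟨β, hβroot⟩ := Complex.exists_root hbdeg
    have hβ : r < ‖β - c‖ := hcon β hβroot
    obtain ⟨b₁, hbfac⟩ := dvd_iff_isRoot.mpr hβroot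
    have hb₁ne : b₁ ≠ 0 := by
      intro h
      rw [h, mul_zero] at hbfac
      exact hbne hbfac
    have hb₁deg : b₁.natDegree = n - 1 := by
      have := hb
      rw [hbfac, natDegree_mul (X_sub_C_ne_zero β) hb₁ne, natDegree_X_sub_C] at this
      omega
    obtain ⟨m, rfl⟩ : ∃ m, n = m + 1 := ⟨n - 1, by omega⟩
    have hb₁deg' : b₁.natDegree = m := by omega
    have hane : a ≠ 0 := by
      intro h
      rw [h, natDegree_zero] at ha
      omega
    have hadeg1 : 1 ≤ a.natDegree := by omega
    set g : ℂ[X] := C ((m:ℂ)+1) * a + (C β - X) * derivative a with hg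
    have hgap : apolarSum m g b₁ = 0 := by
      rw [hg, apolar_step m a b₁ β (coeff_eq_zero_of_natDegree_lt (by omega)), ← hbfac, hap,
        mul_zero]
    have hlag : ∀ ζ : ℂ, r < ‖ζ - c‖ → eval ζ g ≠ 0 := by
      intro ζ hζ
      have h := laguerre c r hr a hane hadeg1 hz β ζ hβ hζ
      rw [ha] at h
      have : ((m+1 : ℕ) : ℂ) = (m:ℂ)+1 := by push_cast; ring
      rwa [this] at h
    have hgz : ∀ z : ℂ, g.IsRoot z → ‖z - c‖ ≤ r := by
      intro z hzr
      by_contra h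
      push_neg at h
      exact hlag z h hzr
    have hgdegle : g.natDegree ≤ m := coeff_polar_high a β m (le_of_eq ha)
    rcases Nat.eq_zero_or_pos m with hm0 | hm1
    · -- base case n = 1
      subst hm0
      have hb₁c : b₁.coeff 0 ≠ 0 := by
        intro h
        apply hb₁ne
        rw [eq_C_of_natDegree_le_zero (le_of_eq hb₁deg'), h, map_zero]
      have hg0 : g.coeff 0 = 0 := by
        have := hgap
        unfold apolarSum at this
        simp only [zero_add, Finset.range_one, Finset.sum_singleton, pow_zero, one_mul,
          Nat.choose_self, Nat.cast_one, div_one, Nat.sub_self, Nat.sub_zero,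
          Nat.choose_zero_right] at this
        exact (mul_eq_zero.mp this).resolve_right hb₁c
      have : g = 0 := by
        rw [eq_C_of_natDegree_le_zero hgdegle, hg0, map_zero]
      exact hlag β hβ (by rw [this, eval_zero])
    · -- inductive step
      have hcard : a.roots.card = m + 1 := by
        rw [splits_iff_card_roots.mp (IsAlgClosed.splits a), ha]
      have hlc : a.leadingCoeff ≠ 0 := leadingCoeff_ne_zero.mpr hane
      have hgm : g.coeff m ≠ 0 := by
        rw [hg, coeff_polar]
        have h1 : a.coeff (m+1) = a.leadingCoeff := by
          rw [← ha]; rfl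
        rw [coeff_sub_one a hane m ha, h1]
        have hsb := roots_sum_bound c r a hz
        rw [hcard] at hsb
        intro h0
        have h2 : a.leadingCoeff * (((m:ℂ)+1)*β - a.roots.sum) = 0 := by
          linear_combination h0
        have hSeq : a.roots.sum = ((m:ℂ)+1) * β := by
          have h3 := (mul_eq_zero.mp h2).resolve_left hlc
          linear_combination -h3
        rw [hSeq] at hsb
        have key : ((m+1:ℕ):ℝ) * ‖β - c‖ ≤ ((m+1:ℕ):ℝ) * r := by
          calc ((m+1:ℕ):ℝ) * ‖β - c‖
              = ‖((m+1:ℕ):ℂ) * (β - c)‖ := by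
                rw [norm_mul, Complex.norm_natCast]
            _ = ‖((m:ℂ)+1) * β - ((m+1:ℕ):ℂ) * c‖ := by
                congr 1
                push_cast
                ring
            _ ≤ ((m+1:ℕ):ℝ) * r := hsb
        have hpos : (0:ℝ) < ((m+1:ℕ):ℝ) := by positivity
        nlinarith
      have hgdeg : g.natDegree = m := le_antisymm hgdegle (le_natDegree_of_ne_zero hgm)
      obtain ⟨w, hw, hwD⟩ := IH m (by omega) hm1 g b₁ hgdeg hb₁deg' hgap hgz
      have hwb : b.IsRoot w := by
        rw [hbfac]
        show eval w ((X - C β) * b₁) = 0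
        rw [eval_mul, show eval w b₁ = 0 from hw, mul_zero]
      exact absurd hwD (not_le.mpr (hcon w hwb))

/-- **Grace's theorem (closed-disc case).** If `a` and `b` are apolar polynomials of
degree `n ≥ 1` and all zeros of `a` lie in the closed disc `{z : |z - c| ≤ r}`,
then at least one zero of `b` lies in that disc. -/
theorem grace_closed_disc (n : ℕ) (hn : 1 ≤ n)
    (a b : Polynomial ℂ) (ha : a.natDegree = n) (hb : b.natDegree = n)
    (c : ℂ) (r : ℝ) (hr : 0 < r)
    (hapolar : apolarSum n a b = 0)
    (hzeros : ∀ z : ℂ, a.IsRoot z → ‖z - c‖ ≤ r) :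
    ∃ w : ℂ, b.IsRoot w ∧ ‖w - c‖ ≤ r :=
  grace_aux c r hr n hn a b ha hb hapolar hzeros
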